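/- Let k > 0, C₀ > 0 be constants and let (φ, d) : I → ℝ solve the reduced system φ' = -φd, d' = -½(d² + 4k² - C₀φ²) with φ(t) > 0 on I. Then the function V(t) := (d(t)² + (√C₀·φ(t) - 2k)²)/φ(t) is constant on I. -/

import Mathlib

/-- The Lyapunov function `V = (d² + (√C₀·φ - 2k)²)/φ` is a material invariant of the
reduced system `φ' = -φd`, `d' = -(d² + 4k² - C₀φ²)/2` on `{φ > 0}`. -/
theorem lyapunov_material_invariant (k C₀ : ℝ) (hk : 0 < k) (hC : 0 < C₀)
    (I : Set ℝ) (hI : I.OrdConnected) (h0 : (0 : ℝ) ∈ I)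
    (φ d : ℝ → ℝ)
    (hφ : ∀ t ∈ I, HasDerivAt φ (-(φ t) * d t) t)
    (hd : ∀ t ∈ I, HasDerivAt d (-(1 / 2) * ((d t) ^ 2 + 4 * k ^ 2 - C₀ * (φ t) ^ 2)) t)
    (hpos : ∀ t ∈ I, 0 < φ t) :
    ∀ t ∈ I, ((d t) ^ 2 + (Real.sqrt C₀ * φ t - 2 * k) ^ 2) / φ t
      = ((d 0) ^ 2 + (Real.sqrt C₀ * φ 0 - 2 * k) ^ 2) / φ 0 := by
  set c := Real.sqrt C₀ with hc
  have hc2 : c ^ 2 = C₀ := Real.sq_sqrt hC.le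
  set V : ℝ → ℝ := fun t => ((d t) ^ 2 + (c * φ t - 2 * k) ^ 2) / φ t with hV
  have key : ∀ t ∈ I, HasDerivAt V 0 t := by
    intro t ht
    have hφt := hφ t ht
    have hdt := hd t ht
    have hpt := hpos t ht
    have hN : HasDerivAt (fun t => (d t) ^ 2 + (c * φ t - 2 * k) ^ 2)
        (2 * d t * (-(1 / 2) * ((d t) ^ 2 + 4 * k ^ 2 - C₀ * (φ t) ^ 2))
          + 2 * (c * φ t - 2 * k) * (c * (-(φ t) * d t))) t := by
      have h1 : HasDerivAt (fun t => (d t) ^ 2)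
          (2 * d t * (-(1 / 2) * ((d t) ^ 2 + 4 * k ^ 2 - C₀ * (φ t) ^ 2))) t := by
        simpa [mul_comm, mul_assoc, Pi.pow_def] using hdt.pow 2
      have h2 : HasDerivAt (fun t => (c * φ t - 2 * k) ^ 2)
          (2 * (c * φ t - 2 * k) * (c * (-(φ t) * d t))) t := by
        have := ((hφt.const_mul c).sub_const (2 * k)).pow 2
        simpa [mul_comm, mul_assoc, Pi.pow_def] using this
      exact h1.add h2
    have hdiv := hN.div hφt hpt.ne'
    have heq : ((2 * d t * (-(1 / 2) * ((d t) ^ 2 + 4 * k ^ 2 - C₀ * (φ t) ^ 2))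
          + 2 * (c * φ t - 2 * k) * (c * (-(φ t) * d t))) * φ t
        - ((d t) ^ 2 + (c * φ t - 2 * k) ^ 2) * (-(φ t) * d t)) / (φ t) ^ 2 = 0 := by
      rw [← hc2]; field_simp; ring
    rw [heq] at hdiv
    exact hdiv
  intro t ht
  have conv : Convex ℝ I := hI.convex
  have hle := conv.norm_image_sub_le_of_norm_hasDerivWithin_le
    (f := V) (f' := fun _ => 0) (C := 0)
    (fun x hx => (key x hx).hasDerivWithinAt) (fun x _ => by simp) ht h0
  simp only [zero_mul, norm_le_zero_iff, sub_eq_zero] at hle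
  exact hle.symm
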